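/- arXiv:1101.3126 — 5 statements merged into one kernel-verified Lean document; each statement's English description precedes it below -/
import Mathlib

section
/- Let G be a graph on vertex set V = {v_1, ..., v_n} with s = v_1, t = v_n, and vertex coloring c : V → S. Construct G' by adding four new vertices s', t', a, b, with edge set E(G') = E(G) ∪ {s's, t't} ∪ {a v_i : i ∈ [n]} ∪ {b v_i : i ∈ [n]}, and define c' by c'(v) = c(v) for v ∈ V \ {s, t}, c'(s) = c'(a) = c_1, c'(t) = c'(b) = c_2 for two distinct new colors c_1, c_2. Then every path from s' to t' in G' that is rainbow under c' passes through s and t, contains neither a nor b, and its subpath from s to t is a path in G that is rainbow under c. -/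
open SimpleGraph

/-- A walk is a rainbow path if it is a path and its internal vertices
(the support without the first and last vertex) receive pairwise distinct colors. -/
def IsRainbowPath {V α : Type*} (G : SimpleGraph V) (c : V → α) {u v : V}
    (p : G.Walk u v) : Prop :=
  p.IsPath ∧ (p.support.tail.dropLast.map c).Nodup

/-- The graph `G'` obtained from `G` by adding four new vertices
`s' = Sum.inr 0`, `t' = Sum.inr 1`, `a = Sum.inr 2`, `b = Sum.inr 3`,
where `s'` is joined to `s`, `t'` is joined to `t`, and `a` and `b` are joined
to every original vertex. -/
def extGraph {V : Type*} (G : SimpleGraph V) (s t : V) : SimpleGraph (V ⊕ Fin 4) :=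
  SimpleGraph.fromRel (fun x y =>
    (∃ u v : V, x = Sum.inl u ∧ y = Sum.inl v ∧ G.Adj u v) ∨
    (x = Sum.inr 0 ∧ y = Sum.inl s) ∨
    (x = Sum.inr 1 ∧ y = Sum.inl t) ∨
    (∃ u : V, x = Sum.inr 2 ∧ y = Sum.inl u) ∨
    (∃ u : V, x = Sum.inr 3 ∧ y = Sum.inl u))

lemma adj0 {V : Type*} {G : SimpleGraph V} {s t : V} {x : V ⊕ Fin 4} :
    (extGraph G s t).Adj (Sum.inr 0) x ↔ x = Sum.inl s := by
  unfold extGraph; rw [fromRel_adj]; aesop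

lemma adj1 {V : Type*} {G : SimpleGraph V} {s t : V} {x : V ⊕ Fin 4} :
    (extGraph G s t).Adj x (Sum.inr 1) ↔ x = Sum.inl t := by
  unfold extGraph; rw [fromRel_adj]; aesop

lemma adjL {V : Type*} {G : SimpleGraph V} {s t : V} {u : V} {x : V ⊕ Fin 4} :
    (extGraph G s t).Adj (Sum.inl u) x ↔
      (∃ v, x = Sum.inl v ∧ G.Adj u v) ∨ (x = Sum.inr 0 ∧ u = s) ∨
      (x = Sum.inr 1 ∧ u = t) ∨ x = Sum.inr 2 ∨ x = Sum.inr 3 := by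
  unfold extGraph; rw [fromRel_adj]
  constructor
  · rintro ⟨hne, h | h⟩ <;>
      rcases h with ⟨a,v,h1,h2,h3⟩ | ⟨h1,h2⟩ | ⟨h1,h2⟩ | ⟨a,h1,h2⟩ | ⟨a,h1,h2⟩ <;>
      simp_all [G.adj_symm]
  · rintro (⟨v,rfl,h⟩ | ⟨rfl,rfl⟩ | ⟨rfl,rfl⟩ | rfl | rfl)
    · exact ⟨by simpa using h.ne, Or.inl (Or.inl ⟨u, v, rfl, rfl, h⟩)⟩
    · exact ⟨by simp, Or.inr (Or.inr (Or.inl ⟨rfl, rfl⟩))⟩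
    · exact ⟨by simp, Or.inr (Or.inr (Or.inr (Or.inl ⟨rfl, rfl⟩)))⟩
    · exact ⟨by simp, Or.inr (Or.inr (Or.inr (Or.inr (Or.inl ⟨u, rfl, rfl⟩))))⟩
    · exact ⟨by simp, Or.inr (Or.inr (Or.inr (Or.inr (Or.inr ⟨u, rfl, rfl⟩))))⟩

lemma support_dropLast_concat {V' : Type*} {G' : SimpleGraph V'} {a b : V'}
    (w : G'.Walk a b) : w.support = w.support.dropLast ++ [b] := by
  induction w with
  | nil => simp
  | @cons a x b h w ih =>
    rw [Walk.support_cons]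
    conv_lhs => rw [ih]
    have hne : w.support ≠ [] := w.support_ne_nil
    rw [List.dropLast_cons_of_ne_nil hne, ih, List.cons_append]

lemma mem_internal {V' : Type*} {G' : SimpleGraph V'} {a b : V'} (w : G'.Walk a b) {x : V'}
    (hx : x ∈ w.support) (h1 : x ≠ a) (h2 : x ≠ b) : x ∈ w.support.tail.dropLast := by
  have h := support_dropLast_concat w
  have hcons := w.support_eq_cons
  rcases ht : w.support.tail with _ | ⟨cc, rest⟩
  · rw [hcons, ht] at hx; simp at hx; exact absurd hx h1
  · have htail : w.support.tail = w.support.tail.dropLast ++ [b] := by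
      rw [hcons, ht] at h
      rw [List.dropLast_cons_of_ne_nil (by simp)] at h
      rw [ht]
      exact (List.cons_injective.eq_iff.mp h)
    rw [hcons] at hx
    rcases List.mem_cons.mp hx with h' | h'
    · exact absurd h' h1
    · rw [htail] at h'
      rcases List.mem_append.mp h' with h'' | h''
      · rwa [ht] at h''
      · simp at h''; exact absurd h'' h2

lemma mem_inl_t {V : Type*} {G : SimpleGraph V} {s t : V} :
    ∀ {y z : V ⊕ Fin 4} (w : (extGraph G s t).Walk y z),
      z = Sum.inr 1 → y ≠ Sum.inr 1 → Sum.inl t ∈ w.support := by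
  intro y z w
  induction w with
  | nil => intro h1 h2; exact absurd h1 h2
  | @cons y x z h w ih =>
    intro h1 h2
    by_cases hx : x = Sum.inr 1
    · subst hx
      have hy := adj1.mp h
      subst hy
      simp [Walk.support_cons]
    · have := ih h1 hx
      simp [Walk.support_cons, this]

lemma lift_walk {V : Type*} {G : SimpleGraph V} {s t : V} :
    ∀ {y z : V ⊕ Fin 4} (w : (extGraph G s t).Walk y z), w.IsPath →
      Sum.inr 0 ∉ w.support → Sum.inr 2 ∉ w.support → Sum.inr 3 ∉ w.support →
      ∀ u, y = Sum.inl u → z = Sum.inr 1 →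
      ∃ q : G.Walk u t, w.support = q.support.map Sum.inl ++ [Sum.inr 1] := by
  intro y z w
  induction w with
  | nil =>
    intro _ _ _ _ u hy hz
    rw [hz] at hy; simp at hy
  | @cons y x z h w ih =>
    intro hp h0 h2 h3 u hy hz
    subst hy
    rcases adjL.mp h with ⟨v, hx, hadj⟩ | ⟨hx, rfl⟩ | ⟨hx, rfl⟩ | hx | hx
    · subst hx
      obtain ⟨q', hq'⟩ := ih hp.of_cons
        (fun hh => h0 (by rw [Walk.support_cons]; exact List.mem_cons_of_mem _ hh))
        (fun hh => h2 (by rw [Walk.support_cons]; exact List.mem_cons_of_mem _ hh))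
        (fun hh => h3 (by rw [Walk.support_cons]; exact List.mem_cons_of_mem _ hh))
        v rfl hz
      exact ⟨Walk.cons hadj q', by simp [Walk.support_cons, hq']⟩
    · exact absurd (by rw [Walk.support_cons]; exact List.mem_cons_of_mem _ (hx ▸ w.start_mem_support)) h0
    · subst hx
      subst hz
      have hw : w = Walk.nil := Walk.isPath_iff_eq_nil.mp hp.of_cons
      subst hw
      exact ⟨Walk.nil, by simp [Walk.support_cons]⟩
    · exact absurd (by rw [Walk.support_cons]; exact List.mem_cons_of_mem _ (hx ▸ w.start_mem_support)) h2
    · exact absurd (by rw [Walk.support_cons]; exact List.mem_cons_of_mem _ (hx ▸ w.start_mem_support)) h3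

/-- every rainbow path from `s'` to `t'` in `G'` passes through `s` and `t`,
avoids `a` and `b`, and its subpath from `s` to `t` is a rainbow path of `G` under `c`. -/
theorem rainbow_path_ext_structure {V S : Type*} (G : SimpleGraph V) (s t : V) (hst : s ≠ t)
    (c : V → S) (c₁ c₂ : S)
    (hc₁ : c₁ ∉ Set.range c) (hc₂ : c₂ ∉ Set.range c) (h₁₂ : c₁ ≠ c₂)
    (c' : V ⊕ Fin 4 → S)
    (hmid : ∀ v : V, v ≠ s → v ≠ t → c' (Sum.inl v) = c v)
    (hs : c' (Sum.inl s) = c₁) (ht : c' (Sum.inl t) = c₂)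
    (ha : c' (Sum.inr 2) = c₁) (hb : c' (Sum.inr 3) = c₂)
    (p : (extGraph G s t).Walk (Sum.inr 0) (Sum.inr 1))
    (hp : IsRainbowPath (extGraph G s t) c' p) :
    Sum.inl s ∈ p.support ∧ Sum.inl t ∈ p.support ∧
      (Sum.inr 2 : V ⊕ Fin 4) ∉ p.support ∧ (Sum.inr 3 : V ⊕ Fin 4) ∉ p.support ∧
      ∃ q : G.Walk s t, IsRainbowPath G c q ∧
        p.support = Sum.inr 0 :: (q.support.map Sum.inl ++ [Sum.inr 1]) := by
  obtain ⟨hpath, hnodup⟩ := hp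
  cases p with
  | cons h p' =>
    rename_i x
    have hx := adj0.mp h
    subst hx
    have hsup : (Walk.cons h p').support = Sum.inr 0 :: p'.support := Walk.support_cons h p'
    have hinternal : (Walk.cons h p').support.tail.dropLast = p'.support.dropLast := by
      rw [hsup]
      rfl
    have hsmem : Sum.inl s ∈ (Walk.cons h p').support := by
      rw [hsup]; exact List.mem_cons_of_mem _ p'.start_mem_support
    have htmem : Sum.inl t ∈ (Walk.cons h p').support := by
      rw [hsup]; exact List.mem_cons_of_mem _ (mem_inl_t p' rfl (by simp))
    have hs_int : Sum.inl s ∈ (Walk.cons h p').support.tail.dropLast :=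
      mem_internal _ hsmem (by simp) (by simp)
    have ht_int : Sum.inl t ∈ (Walk.cons h p').support.tail.dropLast :=
      mem_internal _ htmem (by simp) (by simp)
    have hinj := List.inj_on_of_nodup_map hnodup
    have h2 : (Sum.inr 2 : V ⊕ Fin 4) ∉ (Walk.cons h p').support := by
      intro hmem
      have hint := mem_internal _ hmem (by simp) (by simp)
      have := hinj hint hs_int (by rw [ha, hs])
      simp at this
    have h3 : (Sum.inr 3 : V ⊕ Fin 4) ∉ (Walk.cons h p').support := by
      intro hmem
      have hint := mem_internal _ hmem (by simp) (by simp)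
      have := hinj hint ht_int (by rw [hb, ht])
      simp at this
    have hnd : (Sum.inr 0 :: p'.support).Nodup := by
      rw [← hsup]; exact hpath.support_nodup
    have h0' : (Sum.inr 0 : V ⊕ Fin 4) ∉ p'.support := (List.nodup_cons.mp hnd).1
    obtain ⟨q, hq⟩ := lift_walk p' hpath.of_cons h0'
      (fun hh => h2 (by rw [hsup]; exact List.mem_cons_of_mem _ hh))
      (fun hh => h3 (by rw [hsup]; exact List.mem_cons_of_mem _ hh)) s rfl rfl
    have hp'nd : p'.support.Nodup := (List.nodup_cons.mp hnd).2
    have hmapnd : (q.support.map (Sum.inl : V → V ⊕ Fin 4)).Nodup := by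
      rw [hq] at hp'nd
      exact ((List.sublist_append_left _ _).nodup hp'nd)
    have hqnd : q.support.Nodup := List.Nodup.of_map _ hmapnd
    have hqpath : q.IsPath := (Walk.isPath_def q).mpr hqnd
    have hL : (Walk.cons h p').support.tail.dropLast = q.support.map Sum.inl := by
      rw [hinternal, hq, List.dropLast_concat]
    rw [hL] at hnodup
    refine ⟨hsmem, htmem, h2, h3, q, ⟨hqpath, ?_⟩, by rw [hsup, hq]⟩
    have hMsub : (q.support.tail.dropLast).Sublist q.support :=
      (List.dropLast_sublist _).trans (List.tail_sublist _)
    have hcol : ∀ z ∈ q.support.tail.dropLast, c z = c' (Sum.inl z) := by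
      intro z hzM
      have hz_tail : z ∈ q.support.tail := (List.dropLast_sublist _).subset hzM
      have htl_ne : q.support.tail ≠ [] := List.ne_nil_of_mem hz_tail
      have hzs : z ≠ s := by
        intro hzeq
        have hcs := q.support_eq_cons
        rw [hcs] at hqnd
        exact (List.nodup_cons.mp hqnd).1 (hzeq ▸ hz_tail)
      have hzt : z ≠ t := by
        intro hzeq
        have hconcat := support_dropLast_concat q
        have hcs := q.support_eq_cons
        have hdl : q.support.dropLast = s :: q.support.tail.dropLast := by
          conv_lhs => rw [hcs]
          rw [List.dropLast_cons_of_ne_nil htl_ne]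
        have htnotin : t ∉ q.support.dropLast := by
          intro hcontra
          rw [hconcat] at hqnd
          rcases List.nodup_append'.mp hqnd with ⟨_, _, hdisj⟩
          exact hdisj hcontra (by simp)
        exact htnotin (hdl ▸ List.mem_cons_of_mem _ (hzeq ▸ hzM))
      exact (hmid z hzs hzt).symm
    have : q.support.tail.dropLast.map c
        = (q.support.tail.dropLast.map (Sum.inl : V → V ⊕ Fin 4)).map c' := by
      rw [List.map_map]
      exact List.map_congr_left hcol
    rw [this]
    exact ((hMsub.map (Sum.inl : V → V ⊕ Fin 4)).map c').nodup hnodup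
end

section
/- Let φ be a 3-CNF formula with clauses c_1, ..., c_m over variables x_1, ..., x_n in which each variable x_j occurs positively in exactly k_j ≥ 1 clauses and negatively in exactly ℓ_j ≥ 1 clauses. Construct the vertex-colored graph G_φ as follows: for each variable x_j fix k_j·ℓ_j distinct colors α^j_{a,b} (a ∈ [k_j], b ∈ [ℓ_j]), colors for different variables being distinct; for the a-th positive occurrence of x_j (lying in some clause c_i) introduce a new path on ℓ_j vertices colored α^j_{a,1}, ..., α^j_{a,ℓ_j} in order and associate it with clause c_i; for the b-th negative occurrence of x_j (lying in some clause c_i) introduce a new path on k_j vertices colored α^j_{1,b}, ..., α^j_{k_j,b} in order and associate it with c_i; add two vertices s and t; for each 1 ≤ i ≤ m, join the first vertex of every path associated with c_i to the last vertex of every path associated with c_{i-1} (for i = 1, join the first vertex of every path associated with c_1 to s); and join the last vertex of every path associated with c_m to t. Then: if G_φ contains a rainbow path from s to t, then φ is satisfiable. -/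
open SimpleGraph

namespace SatGadget

variable {m n : ℕ}

/-- The number of clauses in which the literal `(j, b)` occurs
(`b = true` is the positive literal `x_j`, `b = false` is `¬ x_j`).
So `occCount φ j true = k_j` and `occCount φ j false = ℓ_j`. -/
def occCount (φ : Fin m → Finset (Fin n × Bool)) (j : Fin n) (b : Bool) : ℕ :=
  (Finset.univ.filter fun i : Fin m => (j, b) ∈ φ i).card

/-- The number of vertices of the path introduced for an occurrence of the literal
`(j, b)`: a positive occurrence of `x_j` gets a path on `ℓ_j` vertices, a
negative occurrence gets a path on `k_j` vertices. -/
def pathLen (φ : Fin m → Finset (Fin n × Bool)) (j : Fin n) (b : Bool) : ℕ :=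
  occCount φ j (!b)

/-- The index of clause `i` among the clauses containing the literal `(j, b)`,
i.e. this occurrence of `(j, b)` in clause `i` is the `occIdx`-th occurrence
(counting from 0, occurrences ordered by clause index). -/
def occIdx (φ : Fin m → Finset (Fin n × Bool)) (j : Fin n) (b : Bool) (i : Fin m) : ℕ :=
  (Finset.univ.filter fun i' : Fin m => (j, b) ∈ φ i' ∧ i' < i).card

/-- A vertex of one of the occurrence paths: it records the clause `i`, the literal
`(j, b) ∈ φ i` whose occurrence in clause `i` it belongs to, and its position on
the corresponding path. -/
def PathVert (φ : Fin m → Finset (Fin n × Bool)) : Type :=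
  {q : Fin m × (Fin n × Bool) × ℕ // q.2.1 ∈ φ q.1 ∧ q.2.2 < pathLen φ q.2.1.1 q.2.1.2}

/-- The vertex set of `G_φ`: `Sum.inl true = s`, `Sum.inl false = t`, plus the
vertices of the occurrence paths. -/
def Vert (φ : Fin m → Finset (Fin n × Bool)) : Type := Bool ⊕ PathVert φ

/-- The adjacency generating relation of `G_φ`: consecutive vertices of an occurrence
path are joined; the last vertex of every path associated with clause `i` is joined to
the first vertex of every path associated with clause `i+1`; `s` is joined to the first
vertex of every path of clause `1`; the last vertex of every path of clause `m` is
joined to `t`. -/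
def rel (φ : Fin m → Finset (Fin n × Bool)) : Vert φ → Vert φ → Prop
  | Sum.inr q, Sum.inr q' =>
      (q.1.1 = q'.1.1 ∧ q.1.2.1 = q'.1.2.1 ∧ q'.1.2.2 = q.1.2.2 + 1) ∨
      ((q'.1.1 : ℕ) = (q.1.1 : ℕ) + 1 ∧ q.1.2.2 + 1 = pathLen φ q.1.2.1.1 q.1.2.1.2 ∧
        q'.1.2.2 = 0)
  | Sum.inl true, Sum.inr q => (q.1.1 : ℕ) = 0 ∧ q.1.2.2 = 0
  | Sum.inr q, Sum.inl false =>
      (q.1.1 : ℕ) = m - 1 ∧ q.1.2.2 + 1 = pathLen φ q.1.2.1.1 q.1.2.1.2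
  | _, _ => False

/-- The graph `G_φ`. -/
def graph (φ : Fin m → Finset (Fin n × Bool)) : SimpleGraph (Vert φ) :=
  SimpleGraph.fromRel (rel φ)

/-- The vertex coloring of `G_φ`: for each variable `x_j` the colors are
`α^j_{a,b} = Sum.inl (j, a, b)`; the `p`-th vertex of the path of the `a`-th positive
occurrence of `x_j` gets color `α^j_{a,p}`, and the `p`-th vertex of the path of the
`b`-th negative occurrence of `x_j` gets color `α^j_{p,b}`; so colors of different
variables are distinct.  The vertices `s` and `t` get their own colors. -/
def coloring (φ : Fin m → Finset (Fin n × Bool)) : Vert φ → (Fin n × ℕ × ℕ) ⊕ Bool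
  | Sum.inl b => Sum.inr b
  | Sum.inr q => Sum.inl (q.1.2.1.1,
      if q.1.2.1.2 then (occIdx φ q.1.2.1.1 true q.1.1, q.1.2.2)
      else (q.1.2.2, occIdx φ q.1.2.1.1 false q.1.1))

end SatGadget

lemma myGetVert_eq_get {V : Type*} {G : SimpleGraph V} {u v : V} (p : G.Walk u v)
    (k : ℕ) (hk : k < p.support.length) : p.getVert k = p.support.get ⟨k, hk⟩ := by
  induction p generalizing k with
  | nil =>
    simp only [Walk.support_nil, List.length_singleton] at hk
    interval_cases k
    simp
  | cons h q ih =>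
    cases k with
    | zero => simp
    | succ k =>
      simp only [Walk.support_cons, List.length_cons] at hk ⊢
      simpa using ih k (Nat.lt_of_succ_lt_succ hk)

lemma myGetVert_injOn {V : Type*} {G : SimpleGraph V} {u v : V} {p : G.Walk u v}
    (hp : p.IsPath) {a b : ℕ} (ha : a ≤ p.length) (hb : b ≤ p.length)
    (h : p.getVert a = p.getVert b) : a = b := by
  have hla : a < p.support.length := by rw [Walk.length_support]; omega
  have hlb : b < p.support.length := by rw [Walk.length_support]; omega
  rw [myGetVert_eq_get p a hla, myGetVert_eq_get p b hlb] at h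
  have := List.nodup_iff_injective_get.mp hp.support_nodup h
  exact congrArg Fin.val this

lemma mem_middle {V : Type*} {G : SimpleGraph V} {u v : V} (p : G.Walk u v)
    {x : V} (hx : x ∈ p.support) (hu : x ≠ u) (hv : x ≠ v) :
    x ∈ p.support.tail.dropLast := by
  have hcons := p.support_eq_cons
  have htail : x ∈ p.support.tail := by
    rw [hcons] at hx
    rcases List.mem_cons.mp hx with h | h
    · exact absurd h hu
    · exact h
  have hne : p.support.tail ≠ [] := by
    intro h
    rw [h] at htail; simp at htail
  have hlast : p.support.tail.getLast hne = v := by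
    rw [List.getLast_tail, p.getLast_support]
  have heq := List.dropLast_append_getLast hne
  rw [← heq] at htail
  rcases List.mem_append.mp htail with h | h
  · exact h
  · simp only [List.mem_singleton] at h
    exact absurd (h.trans hlast) hv

open SatGadget

lemma occIdx_lt_occCount {m n : ℕ} (φ : Fin m → Finset (Fin n × Bool)) {j : Fin n}
    {b : Bool} {i : Fin m} (h : (j, b) ∈ φ i) : occIdx φ j b i < occCount φ j b := by
  apply Finset.card_lt_card
  constructor
  · intro x hx
    simp only [Finset.mem_filter] at hx ⊢
    exact ⟨hx.1, hx.2.1⟩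
  · intro hsub
    have hi : i ∈ Finset.univ.filter fun i' : Fin m => (j, b) ∈ φ i' := by
      simp [h]
    have := hsub hi
    simp only [Finset.mem_filter] at this
    exact absurd this.2.2 (lt_irrefl i)

lemma full_traversal {m n : ℕ} (hm : 0 < m) (φ : Fin m → Finset (Fin n × Bool))
    (p : (graph φ).Walk (Sum.inl true) (Sum.inl false)) (hp : p.IsPath) (i : Fin m) :
    ∃ l, ∃ hmem : l ∈ φ i, ∀ r (hr : r < pathLen φ l.1 l.2),
      Sum.inr (⟨(i, l, r), ⟨hmem, hr⟩⟩ : PathVert φ) ∈ p.support := by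
  classical
  set B : Vert φ → Prop := fun w =>
    w = Sum.inl false ∨ ∃ q : PathVert φ, w = Sum.inr q ∧ (i : ℕ) < (q.1.1 : ℕ) with hB
  have hlen : 0 < p.length := by
    rcases Nat.eq_zero_or_pos p.length with h | h
    · have h0 := p.getVert_zero
      have h1 := p.getVert_length
      rw [h] at h1
      rw [h0] at h1
      exact absurd (Sum.inl.inj h1) (by decide)
    · exact h
  have hex : ∃ k, k < p.length ∧ B (p.getVert (k + 1)) := by
    refine ⟨p.length - 1, by omega, ?_⟩
    have : p.length - 1 + 1 = p.length := by omega
    rw [this, p.getVert_length]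
    exact Or.inl rfl
  set k0 := Nat.find hex with hk0def
  obtain ⟨hk0lt, hk0B⟩ : k0 < p.length ∧ B (p.getVert (k0 + 1)) := Nat.find_spec hex
  have hmin : ∀ r, r ≤ k0 → ¬ B (p.getVert r) := by
    intro r hr hBr
    cases r with
    | zero =>
      rw [p.getVert_zero] at hBr
      rcases hBr with h | ⟨q, h, _⟩
      · exact absurd (Sum.inl.inj h) (by decide)
      · exact Sum.inl_ne_inr h
    | succ r' =>
      have h1 : r' < k0 := by omega
      have := Nat.find_min hex h1
      push_neg at this
      exact absurd hBr (this (by omega))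
  have hadj := p.adj_getVert_succ hk0lt
  replace hadj := (SimpleGraph.fromRel_adj (rel φ) _ _).mp hadj
  obtain ⟨hne, hrel⟩ := hadj
  -- identify v k0 as the last vertex of a clause-i path
  have hvk0 : ∃ q0 : PathVert φ, p.getVert k0 = Sum.inr q0 ∧ q0.1.1 = i ∧
      q0.1.2.2 + 1 = pathLen φ q0.1.2.1.1 q0.1.2.1.2 := by
    have hnB := hmin k0 le_rfl
    cases h0 : p.getVert k0 with
    | inl b =>
      cases b with
      | false => exact absurd (Or.inl (by rw [h0])) hnB
      | true =>
        exfalso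
        rw [h0] at hrel
        cases h1 : p.getVert (k0 + 1) with
        | inl b' =>
          rw [h1] at hrel hk0B
          cases b' with
          | true =>
            rcases hk0B with h | ⟨q, h, _⟩
            · exact absurd (Sum.inl.inj h) (by decide)
            · exact Sum.inl_ne_inr h
          | false => simp only [rel] at hrel; exact hrel.elim id id
        | inr q =>
          rw [h1] at hrel hk0B
          have hq : (i : ℕ) < (q.1.1 : ℕ) := by
            rcases hk0B with h | ⟨q', h, hq'⟩
            · exact (Sum.inr_ne_inl h).elim
            · replace h := Sum.inr.inj h; rw [← h] at hq'; exact hq'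
          simp only [rel] at hrel
          rcases hrel with h | h
          · omega
          · exact h
    | inr q0 =>
      rw [h0] at hrel
      have hq0 : ¬ (i : ℕ) < (q0.1.1 : ℕ) := by
        intro hlt
        exact hnB (by rw [h0]; exact Or.inr ⟨q0, rfl, hlt⟩)
      cases h1 : p.getVert (k0 + 1) with
      | inl b' =>
        rw [h1] at hrel hk0B
        cases b' with
        | true =>
          rcases hk0B with h | ⟨q, h, _⟩
          · exact absurd (Sum.inl.inj h) (by decide)
          · exact (Sum.inl_ne_inr h).elim
        | false =>
          simp only [rel] at hrel
          have hrel' : (q0.1.1 : ℕ) = m - 1 ∧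
              q0.1.2.2 + 1 = pathLen φ q0.1.2.1.1 q0.1.2.1.2 := by
            rcases hrel with h | h
            · exact h
            · exact h.elim
          refine ⟨q0, rfl, ?_, hrel'.2⟩
          have : (i : ℕ) < m := i.isLt
          exact Fin.ext (by omega)
      | inr q1 =>
        rw [h1] at hrel hk0B
        have hq1 : (i : ℕ) < (q1.1.1 : ℕ) := by
          rcases hk0B with h | ⟨q', h, hq'⟩
          · exact (Sum.inr_ne_inl h).elim
          · replace h := Sum.inr.inj h; rw [← h] at hq'; exact hq'
        simp only [rel] at hrel
        rcases hrel with (⟨hc, _, _⟩ | ⟨hc, hlast, _⟩) | (⟨hc, _, _⟩ | ⟨hc, _, _⟩)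
        · rw [hc] at hq0; exact absurd hq1 hq0
        · refine ⟨q0, rfl, Fin.ext (by omega), hlast⟩
        · rw [← hc] at hq0; exact absurd hq1 hq0
        · omega
  obtain ⟨q0, hq0eq, hq0i, hq0last⟩ := hvk0
  set l : Fin n × Bool := q0.1.2.1 with hldef
  set p0 : ℕ := q0.1.2.2 with hp0def
  have hlmem : l ∈ φ i := by rw [← hq0i]; exact q0.2.1
  have hp0lt : p0 < pathLen φ l.1 l.2 := q0.2.2
  have hbound : ∀ r, p0 - r < pathLen φ l.1 l.2 := fun r => by omega
  have key : ∀ r, r ≤ p0 → p.getVert (k0 - r) =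
      (Sum.inr ⟨(i, l, p0 - r), ⟨hlmem, hbound r⟩⟩ : Vert φ) := by
    intro r
    induction r using Nat.strong_induction_on with
    | _ r ih =>
      cases r with
      | zero =>
        intro _
        refine hq0eq.trans (congrArg Sum.inr (Subtype.ext ?_))
        show q0.1 = (i, l, p0 - 0)
        have : q0.1 = (q0.1.1, q0.1.2.1, q0.1.2.2) := rfl
        rw [this, hq0i]
        rfl
      | succ r =>
        intro hr1
        have hrp0 : r < p0 := by omega
        have prev := ih r (by omega) (by omega)
        have hkpos : 0 < k0 - r := by
          rcases Nat.eq_zero_or_pos (k0 - r) with h | h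
          · rw [h] at prev
            rw [p.getVert_zero] at prev
            exact (Sum.inl_ne_inr prev).elim
          · exact h
        have hidx : k0 - (r + 1) + 1 = k0 - r := by omega
        have hadj2 := p.adj_getVert_succ (show k0 - (r+1) < p.length by omega)
        rw [hidx, prev] at hadj2
        replace hadj2 := (SimpleGraph.fromRel_adj (rel φ) _ _).mp hadj2
        obtain ⟨hne2, hrel2⟩ := hadj2
        have hnB2 := hmin (k0 - (r+1)) (by omega)
        cases h2 : p.getVert (k0 - (r + 1)) with
        | inl b =>
          exfalso
          rw [h2] at hrel2
          cases b with
          | false => exact hnB2 (by rw [h2]; exact Or.inl rfl)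
          | true =>
            rcases hrel2 with h | h
            · have hz : p0 - r = 0 := h.2
              omega
            · exact h
        | inr q2 =>
          rw [h2] at hrel2 hnB2
          have hq2 : ¬ (i : ℕ) < (q2.1.1 : ℕ) := fun hlt =>
            hnB2 (Or.inr ⟨q2, rfl, hlt⟩)
          rcases hrel2 with (⟨hc, hlit, hpos⟩ | ⟨hc2, hm2, hpos⟩) |
            (⟨hc, hlit, hpos⟩ | ⟨hc2, hm2, hpos⟩)
          · -- rel (inr q2) (inr v) disj1 : q2 is the predecessor
            have h1 : q2.1.1 = i := hc
            have h2' : q2.1.2.1 = l := hlit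
            have h3 : p0 - r = q2.1.2.2 + 1 := hpos
            have h4 : q2.1.2.2 = p0 - (r + 1) := by omega
            refine congrArg Sum.inr (Subtype.ext ?_)
            calc q2.1 = (q2.1.1, q2.1.2.1, q2.1.2.2) := rfl
              _ = (i, l, p0 - (r+1)) := by rw [h1, h2', h4]
          · -- rel (inr q2) (inr v) disj2 : v.pos = 0, contra p0 - r > 0
            exfalso
            have hz : p0 - r = 0 := hpos
            omega
          · -- rel (inr v) (inr q2) disj1 : q2 is the successor (i,l,p0-r+1)
            exfalso
            have h1 : q2.1.1 = i := hc.symm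
            have h2' : q2.1.2.1 = l := hlit.symm
            have h3 : q2.1.2.2 = p0 - r + 1 := hpos
            cases r with
            | zero =>
              have hlt := q2.2.2
              rw [h2'] at hlt
              omega
            | succ r' =>
              have prev2 := ih r' (by omega) (by omega)
              have heq2 : p.getVert (k0 - r') = Sum.inr q2 := by
                rw [prev2]
                refine congrArg Sum.inr (Subtype.ext ?_)
                have h4 : q2.1.2.2 = p0 - r' := by omega
                calc ((⟨(i, l, p0 - r'), ⟨hlmem, hbound r'⟩⟩ : PathVert φ) : _).1
                    = (i, l, p0 - r') := rfl
                  _ = (q2.1.1, q2.1.2.1, q2.1.2.2) := by rw [h1, h2', h4]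
                  _ = q2.1 := rfl
              rw [← h2] at heq2
              have := myGetVert_injOn hp (by omega) (by omega) heq2.symm
              omega
          · -- rel (inr v) (inr q2) disj2 : q2 in next clause, in B: contra
            exfalso
            have hz : (q2.1.1 : ℕ) = (i : ℕ) + 1 := hc2
            omega
  refine ⟨l, hlmem, fun r hr => ?_⟩
  have hrp0 : r ≤ p0 := by omega
  have hkey := key (p0 - r) (by omega)
  have heq : p0 - (p0 - r) = r := by omega
  have hv : (Sum.inr ⟨(i, l, p0 - (p0 - r)), ⟨hlmem, hbound (p0 - r)⟩⟩ : Vert φ) =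
      Sum.inr (⟨(i, l, r), ⟨hlmem, hr⟩⟩ : PathVert φ) := by
    refine congrArg Sum.inr (Subtype.ext ?_)
    show ((i, l, p0 - (p0 - r)) : Fin m × (Fin n × Bool) × ℕ) = (i, l, r)
    rw [heq]
  exact Walk.mem_support_iff_exists_getVert.mpr ⟨k0 - (p0 - r), hkey.trans hv, (Nat.sub_le _ _).trans hk0lt.le⟩

lemma no_both {m n : ℕ} (φ : Fin m → Finset (Fin n × Bool))
    (p : (graph φ).Walk (Sum.inl true) (Sum.inl false))
    (hp : IsRainbowPath (graph φ) (coloring φ) p)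
    {j : Fin n} {i1 i2 : Fin m} (h1 : (j, true) ∈ φ i1) (h2 : (j, false) ∈ φ i2)
    (f1 : ∀ r (hr : r < pathLen φ j true),
      Sum.inr (⟨(i1, (j, true), r), ⟨h1, hr⟩⟩ : PathVert φ) ∈ p.support)
    (f2 : ∀ r (hr : r < pathLen φ j false),
      Sum.inr (⟨(i2, (j, false), r), ⟨h2, hr⟩⟩ : PathVert φ) ∈ p.support) : False := by
  have ha : occIdx φ j true i1 < pathLen φ j false := occIdx_lt_occCount φ h1
  have hb : occIdx φ j false i2 < pathLen φ j true := occIdx_lt_occCount φ h2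
  set a := occIdx φ j true i1
  set b := occIdx φ j false i2
  set v1 : Vert φ := Sum.inr ⟨(i1, (j, true), b), ⟨h1, hb⟩⟩ with hv1
  set v2 : Vert φ := Sum.inr ⟨(i2, (j, false), a), ⟨h2, ha⟩⟩ with hv2
  have hm1 : v1 ∈ p.support.tail.dropLast :=
    mem_middle p (f1 b hb) (by exact Sum.inr_ne_inl) (by exact Sum.inr_ne_inl)
  have hm2 : v2 ∈ p.support.tail.dropLast :=
    mem_middle p (f2 a ha) (by exact Sum.inr_ne_inl) (by exact Sum.inr_ne_inl)
  have hc : coloring φ v1 = coloring φ v2 := by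
    simp only [hv1, hv2, coloring]
    rfl
  have := List.inj_on_of_nodup_map hp.2 hm1 hm2 hc
  rw [hv1, hv2] at this
  have : ((i1, (j, true), b) : Fin m × (Fin n × Bool) × ℕ) = (i2, (j, false), a) :=
    congrArg Subtype.val (Sum.inr.inj this)
  rw [Prod.mk.injEq, Prod.mk.injEq] at this
  have hbad : ((j, true) : Fin n × Bool) = (j, false) := this.2.1
  have : (true : Bool) = false := congrArg Prod.snd hbad
  exact Bool.noConfusion this

open SatGadget in
/-- if `G_φ` contains a rainbow path from `s` to `t`, then the 3-CNF
formula `φ` is satisfiable. -/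
theorem satisfiable_of_rainbow_path {m n : ℕ} (hm : 0 < m)
    (φ : Fin m → Finset (Fin n × Bool))
    (h3 : ∀ i, (φ i).card ≤ 3)
    (hk : ∀ j, 1 ≤ occCount φ j true) (hl : ∀ j, 1 ≤ occCount φ j false)
    (p : (graph φ).Walk (Sum.inl true) (Sum.inl false))
    (hp : IsRainbowPath (graph φ) (coloring φ) p) :
    ∃ σ : Fin n → Bool, ∀ i : Fin m, ∃ l ∈ φ i, σ l.1 = l.2 := by
  classical
  refine ⟨fun j => if ∃ i1 : Fin m, ∃ h : (j, true) ∈ φ i1,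
      ∀ r (hr : r < pathLen φ j true),
        Sum.inr (⟨(i1, (j, true), r), ⟨h, hr⟩⟩ : PathVert φ) ∈ p.support
    then true else false, fun i => ?_⟩
  obtain ⟨l, hmem, hfull⟩ := full_traversal hm φ p hp.1 i
  refine ⟨l, hmem, ?_⟩
  obtain ⟨j, b⟩ := l
  cases b with
  | true =>
    beta_reduce
    rw [if_pos ⟨i, hmem, hfull⟩]
  | false =>
    beta_reduce
    rw [if_neg]
    rintro ⟨i1, h1, f1⟩
    exact no_both φ p hp h1 hmem f1 hfull
end

section
/- Let φ be a 3-CNF formula with clauses c_1, ..., c_m over variables x_1, ..., x_n in which each variable x_j occurs positively in exactly k_j ≥ 1 clauses and negatively in exactly ℓ_j ≥ 1 clauses, and let G_φ be the vertex-colored graph constructed as follows: for each variable x_j fix k_j·ℓ_j distinct colors α^j_{a,b} (a ∈ [k_j], b ∈ [ℓ_j]), colors for different variables being distinct; for the a-th positive occurrence of x_j (lying in some clause c_i) introduce a new path on ℓ_j vertices colored α^j_{a,1}, ..., α^j_{a,ℓ_j} in order and associate it with clause c_i; for the b-th negative occurrence of x_j (lying in some clause c_i) introduce a new path on k_j vertices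 colored α^j_{1,b}, ..., α^j_{k_j,b} in order and associate it with c_i; add two vertices s and t; for each 1 ≤ i ≤ m, join the first vertex of every path associated with c_i to the last vertex of every path associated with c_{i-1} (for i = 1, join to s); and join the last vertex of every path associated with c_m to t. If φ is satisfiable, then G_φ contains a rainbow path from s to t. -/
open SimpleGraph

namespace SatGadget

variable {m n : ℕ}

lemma occIdx_lt_occIdx (φ : Fin m → Finset (Fin n × Bool)) {j : Fin n} {b : Bool}
    {i i' : Fin m} (hi : (j, b) ∈ φ i) (h : i < i') :
    occIdx φ j b i < occIdx φ j b i' := by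
  apply Finset.card_lt_card
  have hsub : (Finset.univ.filter fun i'' : Fin m => (j, b) ∈ φ i'' ∧ i'' < i) ⊆
      (Finset.univ.filter fun i'' : Fin m => (j, b) ∈ φ i'' ∧ i'' < i') := by
    intro x hx
    simp only [Finset.mem_filter, Finset.mem_univ, true_and] at *
    exact ⟨hx.1, lt_trans hx.2 h⟩
  rw [Finset.ssubset_iff_of_subset hsub]
  exact ⟨i, by simp [hi, h], by simp⟩

section Construction

variable (φ : Fin m → Finset (Fin n × Bool)) (lit : Fin m → Fin n × Bool)
  (hlit : ∀ i, lit i ∈ φ i)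
  (hlen : ∀ i, 1 ≤ pathLen φ (lit i).1 (lit i).2)
  (hco : ∀ i i', (lit i).1 = (lit i').1 → (lit i).2 = (lit i').2)

/-- length of the path chosen for clause `i` -/
def len (i : Fin m) : ℕ := pathLen φ (lit i).1 (lit i).2

/-- the `p`-th vertex of the chosen occurrence path of clause `i` (truncated). -/
def vert (i : Fin m) (p : ℕ) : Vert φ :=
  Sum.inr ⟨(i, lit i, min p (len φ lit i - 1)), hlit i, by
    have h1 := hlen i
    simp only [len] at *
    omega⟩

/-- clause index of a path vertex -/
def clauseIdx : Vert φ → ℕ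
  | Sum.inl _ => 0
  | Sum.inr q => q.1.1.1

/-- position of a path vertex -/
def posIdx : Vert φ → ℕ
  | Sum.inl _ => 0
  | Sum.inr q => q.1.2.2

lemma vert_ne_inl (i : Fin m) (p : ℕ) (b : Bool) :
    vert φ lit hlit hlen i p ≠ Sum.inl b := by simp only [vert]; exact Sum.inr_ne_inl

lemma vert_inj {i i' : Fin m} {p p' : ℕ} (hp : p < len φ lit i) (hp' : p' < len φ lit i')
    (h : vert φ lit hlit hlen i p = vert φ lit hlit hlen i' p') : i = i' ∧ p = p' := by
  have hc : i.1 = i'.1 := congrArg (clauseIdx φ) h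
  have hp2 : min p (len φ lit i - 1) = min p' (len φ lit i' - 1) := congrArg (posIdx φ) h
  have hi : i = i' := Fin.ext hc
  have hll : len φ lit i = len φ lit i' := by rw [hi]
  exact ⟨hi, by omega⟩

lemma coloring_vert (i : Fin m) (p : ℕ) (hp : p < len φ lit i) :
    coloring φ (vert φ lit hlit hlen i p) = Sum.inl ((lit i).1,
      if (lit i).2 then (occIdx φ (lit i).1 true i, p)
      else (p, occIdx φ (lit i).1 false i)) := by
  have : min p (len φ lit i - 1) = p := by omega
  simp only [coloring, vert, this]

lemma coloring_inl (b : Bool) : coloring φ (Sum.inl b : Vert φ) = Sum.inr b := rfl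

include hco in
lemma coloring_vert_ne {i i' : Fin m} {p p' : ℕ}
    (hp : p < len φ lit i) (hp' : p' < len φ lit i')
    (h : i.1 < i'.1 ∨ (i = i' ∧ p < p')) :
    coloring φ (vert φ lit hlit hlen i p) ≠ coloring φ (vert φ lit hlit hlen i' p') := by
  rw [coloring_vert φ lit hlit hlen i p hp, coloring_vert φ lit hlit hlen i' p' hp']
  intro heq
  simp only [Sum.inl.injEq, Prod.mk.injEq] at heq
  obtain ⟨hj, hpair⟩ := heq
  have hb : (lit i).2 = (lit i').2 := hco i i' hj
  rw [hj, hb] at hpair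
  rcases h with h | ⟨hii, hpp⟩
  · have hlt : i < i' := Fin.lt_def.mpr h
    have hmem : ((lit i).1, (lit i).2) ∈ φ i := by
      have := hlit i; simpa using this
    have hocc : occIdx φ (lit i).1 (lit i).2 i < occIdx φ (lit i).1 (lit i).2 i' :=
      occIdx_lt_occIdx φ hmem hlt
    rw [hj, hb] at hocc
    cases hB : (lit i').2 with
    | true =>
      rw [hB] at hpair hocc
      simp only [if_true, Prod.mk.injEq] at hpair
      omega
    | false =>
      rw [hB] at hpair hocc
      simp only [Bool.false_eq_true, if_false, Prod.mk.injEq] at hpair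
      omega
  · rw [hii] at hpair
    cases hB : (lit i').2 with
    | true =>
      rw [hB] at hpair
      simp only [if_true, Prod.mk.injEq] at hpair
      omega
    | false =>
      rw [hB] at hpair
      simp only [Bool.false_eq_true, if_false, Prod.mk.injEq] at hpair
      omega

lemma adj_within {i : Fin m} {p : ℕ} (h : p + 1 < len φ lit i) :
    (graph φ).Adj (vert φ lit hlit hlen i p) (vert φ lit hlit hlen i (p+1)) := by
  rw [graph, fromRel_adj]
  constructor
  · intro hv
    have := vert_inj φ lit hlit hlen (by omega) h hv
    omega
  · left
    show (_ ∧ _ ∧ _) ∨ _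
    left
    refine ⟨rfl, rfl, ?_⟩
    show min (p+1) (len φ lit i - 1) = min p (len φ lit i - 1) + 1
    omega

lemma adj_cross {i i' : Fin m} {p : ℕ} (hp : p + 1 = len φ lit i)
    (h : i'.1 = i.1 + 1) :
    (graph φ).Adj (vert φ lit hlit hlen i p) (vert φ lit hlit hlen i' 0) := by
  rw [graph, fromRel_adj]
  constructor
  · intro hv
    have hh := vert_inj φ lit hlit hlen (by omega) (hlen i') hv
    have : i = i' := hh.1
    omega
  · left
    show (_ ∧ _ ∧ _) ∨ ((_ : ℕ) = _ + 1 ∧ _ + 1 = pathLen φ _ _ ∧ _ = 0)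
    right
    have h1 := hlen i
    have h1' := hlen i'
    refine ⟨h, ?_, ?_⟩
    · show min p (len φ lit i - 1) + 1 = pathLen φ (lit i).1 (lit i).2
      show min p (len φ lit i - 1) + 1 = len φ lit i
      omega
    · show min 0 (len φ lit i' - 1) = 0
      omega

lemma adj_start {i : Fin m} (h : i.1 = 0) :
    (graph φ).Adj (Sum.inl true) (vert φ lit hlit hlen i 0) := by
  erw [graph, fromRel_adj]
  refine ⟨(vert_ne_inl φ lit hlit hlen i 0 true).symm, Or.inl ?_⟩
  show (_ : ℕ) = 0 ∧ _ = 0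
  have h1 := hlen i
  exact ⟨h, by show min 0 (len φ lit i - 1) = 0; omega⟩

lemma adj_end {i : Fin m} {p : ℕ} (hp : p + 1 = len φ lit i) (h : i.1 = m - 1) :
    (graph φ).Adj (vert φ lit hlit hlen i p) (Sum.inl false) := by
  erw [graph, fromRel_adj]
  refine ⟨vert_ne_inl φ lit hlit hlen i p false, Or.inl ?_⟩
  show (_ : ℕ) = m - 1 ∧ _ + 1 = pathLen φ _ _
  refine ⟨h, ?_⟩
  show min p (len φ lit i - 1) + 1 = len φ lit i
  omega

/-- The rainbow walk from `vert i p` to `t`, together with all invariants needed. -/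
def walkFrom (i : Fin m) (p : ℕ) (hp : p < len φ lit i) :
    {w : (graph φ).Walk (vert φ lit hlit hlen i p) (Sum.inl false) //
      (∀ v ∈ w.support, v = Sum.inl false ∨
        ∃ i' p', p' < len φ lit i' ∧ v = vert φ lit hlit hlen i' p' ∧
          (i.1 < i'.1 ∨ (i = i' ∧ p ≤ p'))) ∧
      w.support.Nodup ∧ (w.support.map (coloring φ)).Nodup} :=
  if h1 : p + 1 < len φ lit i then
    let W := walkFrom i (p + 1) h1
    ⟨Walk.cons (adj_within φ lit hlit hlen h1) W.1, by
      obtain ⟨Wmem, Wnd, Wcnd⟩ := W.2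
      refine ⟨?_, ?_, ?_⟩
      · intro v hv
        erw [Walk.support_cons, List.mem_cons] at hv
        rcases hv with rfl | hv
        · exact Or.inr ⟨i, p, hp, rfl, Or.inr ⟨rfl, le_rfl⟩⟩
        · rcases Wmem v hv with h | ⟨i', p', h2, h3, h4⟩
          · exact Or.inl h
          · exact Or.inr ⟨i', p', h2, h3, by omega⟩
      · erw [Walk.support_cons, List.nodup_cons]
        refine ⟨?_, Wnd⟩
        intro hmem
        rcases Wmem _ hmem with h | ⟨i', p', h2, h3, h4⟩
        · exact vert_ne_inl φ lit hlit hlen i p false h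
        · have := vert_inj φ lit hlit hlen hp h2 h3
          omega
      · erw [Walk.support_cons, List.map_cons, List.nodup_cons]
        refine ⟨?_, Wcnd⟩
        intro hmem
        rw [List.mem_map] at hmem
        obtain ⟨v, hv, hcv⟩ := hmem
        rcases Wmem v hv with h | ⟨i', p', h2, h3, h4⟩
        · rw [h, coloring_inl, coloring_vert φ lit hlit hlen i p hp] at hcv
          exact absurd hcv (by simp)
        · subst h3
          exact coloring_vert_ne φ lit hlit hlen hco hp h2 (by omega) hcv.symm⟩
  else if h2 : i.1 + 1 < m then
    let i' : Fin m := ⟨i.1 + 1, h2⟩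
    let W := walkFrom i' 0 (hlen i')
    ⟨Walk.cons (adj_cross φ lit hlit hlen (by omega) rfl) W.1, by
      obtain ⟨Wmem, Wnd, Wcnd⟩ := W.2
      have hstep : ∀ i'' : Fin m, i'.1 < i''.1 ∨ (i' = i'' ∧ (0:ℕ) ≤ 0) → i.1 < i''.1 := by
        intro i'' h
        rcases h with h | ⟨h, _⟩
        · simp only [i'] at h; omega
        · subst h; simp [i']
      refine ⟨?_, ?_, ?_⟩
      · intro v hv
        erw [Walk.support_cons, List.mem_cons] at hv
        rcases hv with rfl | hv
        · exact Or.inr ⟨i, p, hp, rfl, Or.inr ⟨rfl, le_rfl⟩⟩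
        · rcases Wmem v hv with h | ⟨i'', p', h2', h3, h4⟩
          · exact Or.inl h
          · refine Or.inr ⟨i'', p', h2', h3, Or.inl ?_⟩
            rcases h4 with h4 | ⟨h4, _⟩
            · simp only [i'] at h4; omega
            · subst h4; simp [i']
      · erw [Walk.support_cons, List.nodup_cons]
        refine ⟨?_, Wnd⟩
        intro hmem
        rcases Wmem _ hmem with h | ⟨i'', p', h2', h3, h4⟩
        · exact vert_ne_inl φ lit hlit hlen i p false h
        · have h5 := vert_inj φ lit hlit hlen hp h2' h3
          have : i.1 < i''.1 := by
            rcases h4 with h4 | ⟨h4, _⟩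
            · simp only [i'] at h4; omega
            · subst h4; simp [i']
          have : i = i'' := h5.1
          omega
      · erw [Walk.support_cons, List.map_cons, List.nodup_cons]
        refine ⟨?_, Wcnd⟩
        intro hmem
        rw [List.mem_map] at hmem
        obtain ⟨v, hv, hcv⟩ := hmem
        rcases Wmem v hv with h | ⟨i'', p', h2', h3, h4⟩
        · rw [h, coloring_inl, coloring_vert φ lit hlit hlen i p hp] at hcv
          exact absurd hcv (by simp)
        · subst h3
          have : i.1 < i''.1 := by
            rcases h4 with h4 | ⟨h4, _⟩
            · simp only [i'] at h4; omega
            · subst h4; simp [i']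
          exact coloring_vert_ne φ lit hlit hlen hco hp h2' (Or.inl this) hcv.symm⟩
  else
    ⟨Walk.cons (adj_end φ lit hlit hlen (by omega) (by have := i.2; omega)) Walk.nil, by
      refine ⟨?_, ?_, ?_⟩
      · intro v hv
        erw [Walk.support_cons, Walk.support_nil, List.mem_cons, List.mem_singleton] at hv
        rcases hv with rfl | rfl
        · exact Or.inr ⟨i, p, hp, rfl, Or.inr ⟨rfl, le_rfl⟩⟩
        · exact Or.inl rfl
      · erw [Walk.support_cons, Walk.support_nil]
        exact List.nodup_cons.mpr ⟨fun hh => vert_ne_inl φ lit hlit hlen i p false (List.mem_singleton.mp hh), List.nodup_singleton _⟩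
      · erw [Walk.support_cons, Walk.support_nil]
        simp only [List.map_cons, List.map_nil, List.nodup_cons, List.mem_singleton,
          List.mem_cons, List.not_mem_nil, or_false, List.nodup_nil, and_true]
        erw [coloring_vert φ lit hlit hlen i p hp, List.map_cons, List.map_nil, coloring_inl]
        simp⟩
termination_by (m - i.1, len φ lit i - p)
decreasing_by
  · simp_wf; right; omega
  · simp_wf; left; omega

end Construction

end SatGadget


open SatGadget in
/-- if the 3-CNF formula `φ` is satisfiable, then `G_φ` contains a
rainbow path from `s` to `t`. -/
theorem rainbow_path_of_satisfiable {m n : ℕ} (hm : 0 < m)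
    (φ : Fin m → Finset (Fin n × Bool))
    (h3 : ∀ i, (φ i).card ≤ 3)
    (hk : ∀ j, 1 ≤ occCount φ j true) (hl : ∀ j, 1 ≤ occCount φ j false)
    (hsat : ∃ σ : Fin n → Bool, ∀ i : Fin m, ∃ l ∈ φ i, σ l.1 = l.2) :
    ∃ p : (graph φ).Walk (Sum.inl true) (Sum.inl false),
      IsRainbowPath (graph φ) (coloring φ) p := by
  obtain ⟨σ, hσ⟩ := hsat
  choose lit hlit hval using hσ
  have hlen : ∀ i, 1 ≤ pathLen φ (lit i).1 (lit i).2 := by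
    intro i
    rw [pathLen]
    cases h : (lit i).2 with
    | true => simpa using hl (lit i).1
    | false => simpa using hk (lit i).1
  have hco : ∀ i i', (lit i).1 = (lit i').1 → (lit i).2 = (lit i').2 := by
    intro i i' h
    rw [← hval i, ← hval i', h]
  set i0 : Fin m := ⟨0, hm⟩ with hi0
  obtain ⟨w, Wmem, Wnd, Wcnd⟩ := walkFrom φ lit hlit hlen hco i0 0 (hlen i0)
  refine ⟨Walk.cons (adj_start φ lit hlit hlen rfl) w, ?_, ?_⟩
  · erw [Walk.isPath_def, Walk.support_cons, List.nodup_cons]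
    refine ⟨?_, Wnd⟩
    intro hmem
    rcases Wmem _ hmem with h | ⟨i', p', _, h3', _⟩
    · exact Bool.noConfusion (Sum.inl.inj h)
    · exact vert_ne_inl φ lit hlit hlen i' p' true h3'.symm
  · erw [Walk.support_cons, List.tail_cons]
    exact ((List.dropLast_sublist _).map (coloring φ)).nodup Wcnd
end

section
/- Let G be a connected graph of order n ≥ 2. Then rvc(G) ≤ n − 2. -/
open SimpleGraph

/-- `G` has a rainbow-vertex-connecting coloring with `k` colors: there is a vertex
coloring such that any two distinct vertices are joined by a path whose internal
vertices have pairwise distinct colors, all of them among the `k` colors `0, …, k-1`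
(the colors of vertices that are never used as internal vertices are irrelevant, so
a complete graph needs `0` colors). -/
def HasRVCColoring {V : Type*} (G : SimpleGraph V) (k : ℕ) : Prop :=
  ∃ c : V → ℕ, ∀ u v : V, u ≠ v → ∃ p : G.Walk u v, p.IsPath ∧
    (p.support.tail.dropLast.map c).Nodup ∧ ∀ w ∈ p.support.tail.dropLast, c w < k

/-- The rainbow vertex-connection number of `G`: the smallest number of colors needed
to make `G` rainbow vertex-connected. -/
noncomputable def rvc {V : Type*} (G : SimpleGraph V) : ℕ :=
  sInf {k | HasRVCColoring G k}

section Aux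

variable {V : Type*}

/-- Deleting a non-bridge edge of a connected graph keeps it connected. -/
lemma aux_connected_delete_edge (H : SimpleGraph V) (hc : H.Connected) {v w : V}
    (hr : (H \ SimpleGraph.fromEdgeSet {s(v, w)}).Reachable v w) :
    (H \ SimpleGraph.fromEdgeSet {s(v, w)}).Connected := by
  have key : ∀ a b : V, H.Adj a b → (H \ SimpleGraph.fromEdgeSet {s(v, w)}).Reachable a b := by
    intro a b hab
    by_cases he : s(a, b) = s(v, w)
    · rw [Sym2.eq_iff] at he
      rcases he with ⟨rfl, rfl⟩ | ⟨rfl, rfl⟩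
      · exact hr
      · exact hr.symm
    · refine SimpleGraph.Adj.reachable ?_
      rw [SimpleGraph.sdiff_adj]
      refine ⟨hab, fun hcon => ?_⟩
      rw [SimpleGraph.fromEdgeSet_adj] at hcon
      exact he hcon.1
  have : Nonempty V := hc.nonempty
  refine SimpleGraph.Connected.mk ?_
  intro a b
  have h := hc a b
  rw [SimpleGraph.reachable_iff_reflTransGen] at h
  induction h with
  | refl => exact SimpleGraph.Reachable.refl _
  | tail _ h2 ih => exact ih.trans (key _ _ h2)

/-- A connected graph on a finite vertex type has a spanning tree
(here: an acyclic connected spanning subgraph). -/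
lemma aux_exists_spanning_tree [Finite V] (G : SimpleGraph V) (hG : G.Connected) :
    ∃ T : SimpleGraph V, T ≤ G ∧ T.Connected ∧ T.IsAcyclic := by
  classical
  set S : Set ℕ := {n | ∃ H : SimpleGraph V, H ≤ G ∧ H.Connected ∧ H.edgeSet.ncard = n} with hS
  have hne : S.Nonempty := ⟨G.edgeSet.ncard, G, le_rfl, hG, rfl⟩
  obtain ⟨T, hTG, hTc, hTn⟩ := Nat.sInf_mem hne
  refine ⟨T, hTG, hTc, ?_⟩
  rw [SimpleGraph.isAcyclic_iff_forall_adj_isBridge]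
  intro v w hadj
  by_contra hbr
  rw [SimpleGraph.isBridge_iff] at hbr
  push_neg at hbr
  have hr : (T \ SimpleGraph.fromEdgeSet {s(v, w)}).Reachable v w := hbr
  set T' := T \ SimpleGraph.fromEdgeSet {s(v, w)} with hT'
  have hT'c : T'.Connected := aux_connected_delete_edge T hTc hr
  have hT'le : T' ≤ G := le_trans sdiff_le hTG
  have hedge : T'.edgeSet = T.edgeSet \ {s(v, w)} := by
    rw [hT', SimpleGraph.edgeSet_sdiff, SimpleGraph.edgeSet_fromEdgeSet,
      SimpleGraph.edgeSet_sdiff_sdiff_isDiag]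
  have hlt : T'.edgeSet.ncard < T.edgeSet.ncard := by
    rw [hedge]
    exact Set.ncard_diff_singleton_lt_of_mem hadj (Set.toFinite _)
  have hle : sInf S ≤ T'.edgeSet.ncard := Nat.sInf_le ⟨T', hT'le, hT'c, rfl⟩
  omega

/-- In any path, a vertex with at most one neighbor can occur in
`support.dropLast` only as the first vertex. -/
lemma aux_leaf_dropLast {T : SimpleGraph V} {x : V}
    (hx : ∀ a b : V, T.Adj x a → T.Adj x b → a = b) :
    ∀ {u v : V} (p : T.Walk u v), p.IsPath → x ∈ p.support.dropLast → x = u := by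
  intro u v p
  induction p with
  | nil => intro _ hmem; simp at hmem
  | @cons u w v h q ih =>
    intro hp hmem
    rw [SimpleGraph.Walk.support_cons,
      List.dropLast_cons_of_ne_nil (SimpleGraph.Walk.support_ne_nil q)] at hmem
    rcases List.mem_cons.mp hmem with rfl | hmem'
    · rfl
    · have hq : q.IsPath := hp.of_cons
      have hxw : x = w := ih hq hmem'
      subst hxw
      exfalso
      cases q with
      | nil => simp at hmem'
      | @cons _ w₂ _ h' r =>
        have huw₂ : u = w₂ := hx u w₂ h.symm h'
        rw [SimpleGraph.Walk.cons_isPath_iff] at hp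
        refine hp.2 ?_
        rw [huw₂, SimpleGraph.Walk.support_cons]
        exact List.mem_cons_of_mem _ (SimpleGraph.Walk.start_mem_support r)

/-- A vertex with at most one neighbor is never an internal vertex of a path. -/
lemma aux_leaf_not_internal {T : SimpleGraph V} {x : V}
    (hx : ∀ a b : V, T.Adj x a → T.Adj x b → a = b)
    {u v : V} {p : T.Walk u v} (hp : p.IsPath) :
    x ∉ p.support.tail.dropLast := by
  intro hmem
  have ht : p.support.tail ≠ [] := by
    intro h; rw [h] at hmem; simp at hmem
  have hdrop : p.support.dropLast = u :: p.support.tail.dropLast := by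
    conv_lhs => rw [SimpleGraph.Walk.support_eq_cons p]
    exact List.dropLast_cons_of_ne_nil ht
  have hxu : x = u :=
    aux_leaf_dropLast hx p hp (by rw [hdrop]; exact List.mem_cons_of_mem _ hmem)
  have hxt : x ∈ p.support.tail := (List.dropLast_sublist _).subset hmem
  have hnd := hp.support_nodup
  rw [SimpleGraph.Walk.support_eq_cons p] at hnd
  exact (List.nodup_cons.mp hnd).1 (hxu ▸ hxt)

/-- The first vertex of a maximum-length path in an acyclic graph has at most one
neighbor. -/
lemma aux_max_path_leaf {T : SimpleGraph V} (hac : T.IsAcyclic) {x y : V} (p : T.Walk x y)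
    (hp : p.IsPath) (hmax : ∀ (u v : V) (q : T.Walk u v), q.IsPath → q.length ≤ p.length) :
    ∀ a b : V, T.Adj x a → T.Adj x b → a = b := by
  classical
  cases p with
  | nil =>
    intro a b ha _
    exfalso
    have hcons : (SimpleGraph.Walk.cons ha SimpleGraph.Walk.nil).IsPath := by
      rw [SimpleGraph.Walk.cons_isPath_iff]
      simp [ha.ne]
    have := hmax _ _ _ hcons
    simp at this
  | @cons _ w _ h q =>
    suffices hz : ∀ z, T.Adj x z → z = w by
      intro a b ha hb; rw [hz a ha, hz b hb]
    intro z hz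
    by_cases hmem : z ∈ (SimpleGraph.Walk.cons h q).support
    · have htu : ((SimpleGraph.Walk.cons h q).takeUntil z hmem).IsPath := hp.takeUntil hmem
      have hedge : (SimpleGraph.Walk.cons hz SimpleGraph.Walk.nil).IsPath := by
        rw [SimpleGraph.Walk.cons_isPath_iff]
        simp [hz.ne]
      have hequ : (SimpleGraph.Walk.cons h q).takeUntil z hmem
          = SimpleGraph.Walk.cons hz SimpleGraph.Walk.nil :=
        congrArg Subtype.val (hac.path_unique ⟨_, htu⟩ ⟨_, hedge⟩)
      have hspec := (SimpleGraph.Walk.cons h q).take_spec hmem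
      rw [hequ] at hspec
      have hgv := congrArg (fun r => r.getVert 1) hspec
      simpa [SimpleGraph.Walk.cons_append, SimpleGraph.Walk.nil_append,
        SimpleGraph.Walk.getVert_cons_succ, SimpleGraph.Walk.getVert_zero] using hgv
    · exfalso
      have hp' : (SimpleGraph.Walk.cons hz.symm (SimpleGraph.Walk.cons h q)).IsPath := by
        rw [SimpleGraph.Walk.cons_isPath_iff]
        exact ⟨hp, hmem⟩
      have := hmax _ _ _ hp'
      simp [SimpleGraph.Walk.length_cons] at this

/-- A finite tree on at least two vertices has two distinct "leaves": vertices with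
at most one neighbor. -/
lemma aux_exists_leaves [Fintype V] (T : SimpleGraph V) (hc : T.Connected)
    (hac : T.IsAcyclic) (h2 : 2 ≤ Fintype.card V) :
    ∃ x y : V, x ≠ y ∧ (∀ a b : V, T.Adj x a → T.Adj x b → a = b) ∧
      (∀ a b : V, T.Adj y a → T.Adj y b → a = b) := by
  classical
  set S : Set ℕ := {n | ∃ (u v : V) (p : T.Walk u v), p.IsPath ∧ p.length = n} with hS
  obtain ⟨u0, v0, huv0⟩ := Fintype.exists_pair_of_one_lt_card (α := V) (by omega)
  obtain ⟨w0⟩ := hc u0 v0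
  have hS0 : (w0.toPath : T.Walk u0 v0).length ∈ S := ⟨u0, v0, _, w0.toPath.2, rfl⟩
  have hbdd : BddAbove S := by
    refine ⟨Fintype.card V, ?_⟩
    rintro n ⟨u, v, p, hp, rfl⟩
    exact le_of_lt hp.length_lt
  obtain ⟨x, y, p, hp, hlen⟩ := Nat.sSup_mem ⟨_, hS0⟩ hbdd
  have hmax : ∀ (u v : V) (q : T.Walk u v), q.IsPath → q.length ≤ p.length := by
    intro u v q hq
    rw [hlen]
    exact le_csSup hbdd ⟨u, v, q, hq, rfl⟩
  have hmaxr : ∀ (u v : V) (q : T.Walk u v), q.IsPath → q.length ≤ p.reverse.length := by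
    intro u v q hq
    rw [SimpleGraph.Walk.length_reverse]
    exact hmax u v q hq
  have hlx := aux_max_path_leaf hac p hp hmax
  have hly := aux_max_path_leaf hac p.reverse hp.reverse hmaxr
  refine ⟨x, y, ?_, hlx, hly⟩
  -- x ≠ y since p is a path of positive length
  intro hxy
  subst hxy
  cases p with
  | nil =>
    have hq0 : (w0.toPath : T.Walk u0 v0).length ≠ 0 := by
      intro h0
      exact huv0 (SimpleGraph.Walk.eq_of_length_eq_zero h0)
    have := hmax _ _ _ w0.toPath.2
    simp only [SimpleGraph.Walk.length_nil, Nat.le_zero] at this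
    exact hq0 this
  | cons h q =>
    rw [SimpleGraph.Walk.cons_isPath_iff] at hp
    exact hp.2 q.end_mem_support

end Aux

/-- a connected graph of order `n ≥ 2` has `rvc G ≤ n − 2`. -/
theorem rvc_le_card_sub_two {V : Type*} [Fintype V] (G : SimpleGraph V)
    (hG : G.Connected) (h2 : 2 ≤ Fintype.card V) :
    rvc G ≤ Fintype.card V - 2 := by
  classical
  obtain ⟨T, hTG, hTc, hTac⟩ := aux_exists_spanning_tree G hG
  obtain ⟨x, y, hxy, hlx, hly⟩ := aux_exists_leaves T hTc hTac h2
  set s : Finset V := (Finset.univ.erase x).erase y with hs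
  have hy : y ∈ Finset.univ.erase x := Finset.mem_erase.mpr ⟨hxy.symm, Finset.mem_univ _⟩
  have hcard : s.card = Fintype.card V - 2 := by
    have h1 : (Finset.univ.erase x).card = Fintype.card V - 1 := by
      rw [Finset.card_erase_of_mem (Finset.mem_univ x), Finset.card_univ]
    rw [hs, Finset.card_erase_of_mem hy, h1]
    omega
  let e := Fintype.equivFin ↥s
  set c : V → ℕ := fun v => if h : v ∈ s then (e ⟨v, h⟩ : Fin _).val else 0 with hc
  apply Nat.sInf_le
  refine ⟨c, fun u v huv => ?_⟩
  obtain ⟨w0⟩ := hTc u v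
  set p0 : T.Walk u v := (w0.toPath : T.Walk u v) with hp0
  have hp0p : p0.IsPath := w0.toPath.2
  refine ⟨p0.mapLe hTG, (SimpleGraph.Walk.mapLe_isPath hTG).mpr hp0p, ?_⟩
  have hsup : (p0.mapLe hTG).support = p0.support := by
    rw [SimpleGraph.Walk.mapLe, SimpleGraph.Walk.support_map]
    have hid : ⇑(SimpleGraph.Hom.ofLE hTG) = id := rfl
    rw [hid, List.map_id]
  rw [hsup]
  have hint : ∀ z ∈ p0.support.tail.dropLast, z ∈ s := by
    intro z hz
    have hz1 : z ≠ x := fun h => aux_leaf_not_internal hlx hp0p (h ▸ hz)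
    have hz2 : z ≠ y := fun h => aux_leaf_not_internal hly hp0p (h ▸ hz)
    rw [hs]
    exact Finset.mem_erase.mpr ⟨hz2, Finset.mem_erase.mpr ⟨hz1, Finset.mem_univ _⟩⟩
  have hnd : p0.support.tail.dropLast.Nodup :=
    ((List.dropLast_sublist _).trans (List.tail_sublist _)).nodup hp0p.support_nodup
  constructor
  · refine List.Nodup.map_on ?_ hnd
    intro a ha b hb hab
    have ha' := hint a ha
    have hb' := hint b hb
    rw [hc] at hab
    simp only [dif_pos ha', dif_pos hb'] at hab
    have : (⟨a, ha'⟩ : ↥s) = ⟨b, hb'⟩ := e.injective (Fin.val_injective hab)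
    exact congrArg Subtype.val this
  · intro z hz
    have hz' := hint z hz
    rw [hc]
    simp only [dif_pos hz']
    calc ((e ⟨z, hz'⟩ : Fin _) : ℕ) < Fintype.card ↥s := (e ⟨z, hz'⟩).isLt
      _ = s.card := Fintype.card_coe s
      _ = Fintype.card V - 2 := hcard
end

section
/- Let G be a connected graph of order n ≥ 2. Then rc(G) = n − 1 if and only if G is a tree. -/
open SimpleGraph

/-- `G` has a rainbow-connecting edge coloring with `k` colors: there is an edge coloring
such that any two distinct vertices are joined by a path whose edges have pairwise
distinct colors, all of them among the `k` colors `0, …, k-1`. -/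
def HasRCColoring {V : Type*} (G : SimpleGraph V) (k : ℕ) : Prop :=
  ∃ c : Sym2 V → ℕ, ∀ u v : V, u ≠ v → ∃ p : G.Walk u v, p.IsPath ∧
    (p.edges.map c).Nodup ∧ ∀ e ∈ p.edges, c e < k

/-- The rainbow connection number of `G`: the smallest number of colors needed to make
`G` rainbow connected. -/
noncomputable def rc {V : Type*} (G : SimpleGraph V) : ℕ :=
  sInf {k | HasRCColoring G k}

section Aux

variable {V : Type*}

lemma reachable_of_walk_delete {G : SimpleGraph V} {v w : V}
    (h : (G \ fromEdgeSet {s(v, w)}).Reachable v w) {a b : V} (p : G.Walk a b) :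
    (G \ fromEdgeSet {s(v, w)}).Reachable a b := by
  induction p with
  | nil => rfl
  | cons hadj p ih =>
    rename_i x y z
    refine Reachable.trans ?_ ih
    by_cases he : s(x, y) = s(v, w)
    · rw [Sym2.eq_iff] at he
      rcases he with ⟨rfl, rfl⟩ | ⟨rfl, rfl⟩
      · exact h
      · exact h.symm
    · exact Adj.reachable (by simp [sdiff_adj, hadj, he, fromEdgeSet_adj])

lemma exists_tree_le [Fintype V] (G : SimpleGraph V) (hc : G.Connected) :
    ∃ T ≤ G, T.IsTree := by
  obtain ⟨n, hn⟩ : ∃ n, G.edgeSet.ncard = n := ⟨_, rfl⟩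
  induction n using Nat.strong_induction_on generalizing G with
  | _ n ih =>
  by_cases hac : G.IsAcyclic
  · exact ⟨G, le_refl _, hc, hac⟩
  · rw [isAcyclic_iff_forall_edge_isBridge] at hac
    push_neg at hac
    obtain ⟨e, he, hbr⟩ := hac
    induction e using Sym2.ind with
    | _ v w =>
    rw [isBridge_iff] at hbr
    push_neg at hbr
    have hre : (G \ fromEdgeSet {s(v, w)}).Reachable v w := hbr
    set G' := G \ fromEdgeSet {s(v, w)} with hG'
    have hle' : G' ≤ G := sdiff_le
    have hconn' : G'.Connected := by
      have := hc.nonempty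
      exact Connected.mk (fun a b => reachable_of_walk_delete hre ((hc a b).some))
    have hss : G'.edgeSet ⊂ G.edgeSet := by
      refine ⟨edgeSet_mono hle', fun hsub => ?_⟩
      have : G'.Adj v w := (hsub he : _)
      rw [hG', sdiff_adj, fromEdgeSet_adj] at this
      exact this.2 ⟨rfl, (G.ne_of_adj (G.mem_edgeSet.mp he))⟩
    have hlt : G'.edgeSet.ncard < n := by
      rw [← hn]
      exact Set.ncard_lt_ncard hss (Set.toFinite _)
    obtain ⟨T, hTle, hT⟩ := ih _ hlt G' hconn' rfl
    exact ⟨T, hTle.trans hle', hT⟩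

lemma hasRCColoring_of_tree_le {G T : SimpleGraph V} (hle : T ≤ G) (hT : T.IsTree)
    {c : Sym2 V → ℕ} {m : ℕ} (hinj : Set.InjOn c T.edgeSet)
    (hlt : ∀ f ∈ T.edgeSet, c f < m) : HasRCColoring G m := by
  refine ⟨c, fun u v huv => ?_⟩
  obtain ⟨p, hp, -⟩ := hT.existsUnique_path u v
  have hsub : ∀ e ∈ p.edges, e ∈ G.edgeSet :=
    fun e he => edgeSet_mono hle (p.edges_subset_edgeSet he)
  refine ⟨p.transfer G hsub, hp.transfer hsub, ?_, ?_⟩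
  · rw [p.edges_transfer hsub]
    exact hp.isTrail.edges_nodup.map_on
      (fun x hx y hy h => hinj (p.edges_subset_edgeSet hx) (p.edges_subset_edgeSet hy) h)
  · rw [p.edges_transfer hsub]
    exact fun e he => hlt e (p.edges_subset_edgeSet he)

lemma exists_injOn_coloring [Fintype V] (T : SimpleGraph V) (hT : T.IsTree) :
    ∃ c : Sym2 V → ℕ, Set.InjOn c T.edgeSet ∧ ∀ f ∈ T.edgeSet, c f < Fintype.card V - 1 := by
  classical
  letI : Fintype T.edgeSet := Set.Finite.fintype (Set.toFinite _)
  have hcard : T.edgeFinset.card = Fintype.card V - 1 := by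
    have := hT.card_edgeFinset; omega
  set s := T.edgeFinset with hs
  refine ⟨fun f => if h : f ∈ s then ((s.equivFin ⟨f, h⟩ : Fin s.card) : ℕ) else 0, ?_, ?_⟩
  · intro a ha b hb hab
    rw [← mem_edgeFinset, ← hs] at ha hb
    simp only [dif_pos ha, dif_pos hb] at hab
    have := s.equivFin.injective (Fin.val_injective hab)
    simpa using this
  · intro f hf
    rw [← mem_edgeFinset, ← hs] at hf
    simp only [dif_pos hf]
    rw [← hcard]
    exact (s.equivFin ⟨f, hf⟩).isLt

lemma extend_path {G : SimpleGraph V} (hac : G.IsAcyclic) {u x y : V}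
    (q : G.Walk u x) (hq : q.IsPath) (h : G.Adj x y) :
    ∃ (t : V) (r : G.Walk u t), r.IsPath ∧ (∀ f ∈ q.edges, f ∈ r.edges) ∧
      s(x, y) ∈ r.edges := by
  classical
  by_cases hy : y ∈ q.support
  · refine ⟨x, q, hq, fun f hf => hf, ?_⟩
    have hd : (q.dropUntil y hy).IsPath := hq.dropUntil hy
    have hs : (Walk.cons h.symm Walk.nil : G.Walk y x).IsPath := by simp [h.ne']
    have := hac.path_unique ⟨q.dropUntil y hy, hd⟩ ⟨Walk.cons h.symm Walk.nil, hs⟩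
    have heq : q.dropUntil y hy = Walk.cons h.symm Walk.nil := congrArg Subtype.val this
    have : s(x, y) ∈ (q.dropUntil y hy).edges := by
      rw [heq]; simp [Sym2.eq_swap]
    exact q.edges_dropUntil_subset hy this
  · refine ⟨y, q.concat h, ?_, ?_, ?_⟩
    · rw [← Walk.isPath_reverse_iff, Walk.reverse_concat]
      rw [Walk.cons_isPath_iff]
      refine ⟨hq.reverse, by simpa using hy⟩
    · intro f hf
      rw [Walk.edges_concat, List.concat_eq_append]
      exact List.mem_append_left _ hf
    · rw [Walk.edges_concat, List.concat_eq_append]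
      simp

lemma exists_path_through_two_edges {G : SimpleGraph V} (hT : G.IsTree)
    {e1 e2 : Sym2 V} (h1 : e1 ∈ G.edgeSet) (h2 : e2 ∈ G.edgeSet) (hne : e1 ≠ e2) :
    ∃ (u t : V) (r : G.Walk u t), r.IsPath ∧ e1 ∈ r.edges ∧ e2 ∈ r.edges ∧ u ≠ t := by
  classical
  obtain ⟨hconn, hac⟩ := hT
  induction e1 using Sym2.ind with
  | _ a b =>
  induction e2 using Sym2.ind with
  | _ x y =>
  have hab : G.Adj a b := h1
  have hxy : G.Adj x y := h2
  let P0 := ((hconn y a).some).toPath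
  have hp0 : (P0 : G.Walk y a).IsPath := P0.2
  set p0 := (P0 : G.Walk y a)
  obtain ⟨t1, r1, hr1, hsub1, hm1⟩ := extend_path hac p0 hp0 hab
  obtain ⟨t2, r2, hr2, hsub2, hm2⟩ := extend_path hac r1.reverse hr1.reverse hxy.symm
  have he1 : s(a, b) ∈ r2.edges := by
    apply hsub2
    rw [Walk.edges_reverse, List.mem_reverse]
    exact hm1
  have he2 : s(x, y) ∈ r2.edges := by rwa [Sym2.eq_swap] at hm2
  refine ⟨t1, t2, r2, hr2, he1, he2, ?_⟩
  rintro rfl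
  rw [(Walk.isPath_iff_eq_nil (p := r2)).mp hr2] at he1
  simp at he1

lemma tree_rc_lower [Fintype V] {G : SimpleGraph V} (hT : G.IsTree) {k : ℕ}
    (h : HasRCColoring G k) : Fintype.card V - 1 ≤ k := by
  classical
  obtain ⟨c, hc⟩ := h
  letI : Fintype G.edgeSet := Set.Finite.fintype (Set.toFinite _)
  have hcard : G.edgeFinset.card + 1 = Fintype.card V := hT.card_edgeFinset
  have hkey : ∀ u t : V, ∀ r : G.Walk u t, u ≠ t → r.IsPath →
      (r.edges.map c).Nodup ∧ ∀ e ∈ r.edges, c e < k := by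
    intro u t r hut hr
    obtain ⟨p, hp, hnd, hlt⟩ := hc u t hut
    have : p = r := congrArg Subtype.val (hT.2.path_unique ⟨p, hp⟩ ⟨r, hr⟩)
    rw [← this]
    exact ⟨hnd, hlt⟩
  have hle : G.edgeFinset.card ≤ (Finset.range k).card := by
    apply Finset.card_le_card_of_injOn c
    · intro e he
      rw [Finset.mem_coe, mem_edgeFinset] at he
      induction e using Sym2.ind with
      | _ a b =>
      have hadj : G.Adj a b := he
      have hsingle : (Walk.cons hadj Walk.nil : G.Walk a b).IsPath := by simp [hadj.ne]
      obtain ⟨-, hlt⟩ := hkey a b _ hadj.ne hsingle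
      rw [Finset.mem_coe, Finset.mem_range]
      exact hlt s(a, b) (by simp)
    · intro e1 he1 e2 he2 hce
      by_contra hne
      obtain ⟨u, t, r, hr, hm1, hm2, hut⟩ :=
        exists_path_through_two_edges hT (mem_edgeFinset.mp he1) (mem_edgeFinset.mp he2) hne
      obtain ⟨hnd, -⟩ := hkey u t r hut hr
      exact hne (List.inj_on_of_nodup_map hnd hm1 hm2 hce)
  rw [Finset.card_range] at hle
  omega

lemma walk_split {G' : SimpleGraph V} [DecidableEq V] {u w x y : V} (q : G'.Walk u w)
    (hx : x ∈ q.support) (hy : y ∈ q.support) :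
    ∃ (a b : V) (A : G'.Walk u a) (M : G'.Walk a b) (C : G'.Walk b w),
      q = A.append (M.append C) ∧ ((a = x ∧ b = y) ∨ (a = y ∧ b = x)) := by
  by_cases h : y ∈ (q.dropUntil x hx).support
  · refine ⟨x, y, q.takeUntil x hx, (q.dropUntil x hx).takeUntil y h,
      (q.dropUntil x hx).dropUntil y h, ?_, Or.inl ⟨rfl, rfl⟩⟩
    rw [Walk.take_spec, Walk.take_spec]
  · have hyT : y ∈ (q.takeUntil x hx).support := by
      have hy' := hy
      rw [← Walk.take_spec q hx, Walk.mem_support_append_iff] at hy'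
      exact hy'.resolve_right h
    refine ⟨y, x, (q.takeUntil x hx).takeUntil y hyT, (q.takeUntil x hx).dropUntil y hyT,
      q.dropUntil x hx, ?_, Or.inr ⟨rfl, rfl⟩⟩
    rw [Walk.append_assoc, Walk.take_spec, Walk.take_spec]

lemma reroute {G T : SimpleGraph V} (hle : T ≤ G) {c : Sym2 V → ℕ} {m : ℕ} {e2 : Sym2 V}
    (hinj : Set.InjOn c (T.edgeSet \ {e2}))
    (hlt : ∀ f ∈ T.edgeSet, c f < m)
    {u w a b : V} (hGab : G.Adj a b) (hltab : c s(a, b) < m)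
    {A : T.Walk u a} {M : T.Walk a b} {C : T.Walk b w}
    (hq : (A.append (M.append C)).IsPath)
    (he2M : e2 ∈ M.edges)
    (hK : ∀ f ∈ T.edgeSet, c f = c s(a, b) → f ∈ M.edges) :
    ∃ r : G.Walk u w, r.IsPath ∧ (r.edges.map c).Nodup ∧ ∀ f ∈ r.edges, c f < m := by
  have hA : A.IsPath := hq.of_append_left
  have hMC : (M.append C).IsPath := hq.of_append_right
  have hC : C.IsPath := hMC.of_append_right
  -- edges nodup and disjointness
  have hqe : (A.append (M.append C)).edges = A.edges ++ (M.edges ++ C.edges) := by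
    rw [Walk.edges_append, Walk.edges_append]
  have hend : (A.edges ++ (M.edges ++ C.edges)).Nodup := by
    rw [← hqe]; exact hq.isTrail.edges_nodup
  have hdisjA : List.Disjoint A.edges (M.edges ++ C.edges) := List.disjoint_of_nodup_append hend
  have hdisjMC : List.Disjoint M.edges C.edges :=
    List.disjoint_of_nodup_append (List.nodup_append.mp hend).2.1
  -- support facts
  have hqs : (A.append (M.append C)).support
      = A.support ++ (M.support.tail ++ C.support.tail) := by
    rw [Walk.support_append, Walk.support_append]
    rw [Walk.support_eq_cons M]
    simp
  have hsnd : (A.support ++ (M.support.tail ++ C.support.tail)).Nodup := by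
    rw [← hqs]; exact hq.support_nodup
  have hdisjS : List.Disjoint A.support (M.support.tail ++ C.support.tail) :=
    List.disjoint_of_nodup_append hsnd
  have hbM : b ∈ M.support.tail := by
    have hbm := M.end_mem_support
    rw [Walk.support_eq_cons M] at hbm
    rcases List.mem_cons.mp hbm with h1 | h1
    · exact absurd h1.symm hGab.ne
    · exact h1
  -- the rerouted walk
  have hAsub : ∀ f ∈ A.edges, f ∈ G.edgeSet :=
    fun f hf => edgeSet_mono hle (A.edges_subset_edgeSet hf)
  have hCsub : ∀ f ∈ C.edges, f ∈ G.edgeSet :=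
    fun f hf => edgeSet_mono hle (C.edges_subset_edgeSet hf)
  refine ⟨(A.transfer G hAsub).append (Walk.cons hGab (C.transfer G hCsub)), ?_, ?_, ?_⟩
  · rw [Walk.isPath_def, Walk.support_append, Walk.support_cons]
    rw [Walk.support_transfer, Walk.support_transfer]
    simp only [List.tail_cons]
    refine List.Nodup.append hA.support_nodup hC.support_nodup ?_
    intro z hzA hzC
    rw [Walk.support_eq_cons C] at hzC
    rcases List.mem_cons.mp hzC with rfl | h1
    · exact hdisjS hzA (List.mem_append_left _ hbM)
    · exact hdisjS hzA (List.mem_append_right _ h1)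
  · rw [Walk.edges_append, Walk.edges_cons, Walk.edges_transfer, Walk.edges_transfer,
      List.map_append]
    refine List.Nodup.append ?_ ?_ ?_
    · refine (List.nodup_append.mp hend).1.map_on (fun f hf g hg hfg => ?_)
      refine hinj ⟨A.edges_subset_edgeSet hf, fun h' => ?_⟩
        ⟨A.edges_subset_edgeSet hg, fun h' => ?_⟩ hfg
      · exact hdisjA (h' ▸ hf) (List.mem_append_left _ he2M)
      · exact hdisjA (h' ▸ hg) (List.mem_append_left _ he2M)
    · rw [List.map_cons, List.nodup_cons]
      constructor
      · intro hmem
        obtain ⟨g, hg, hcg⟩ := List.mem_map.mp hmem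
        exact hdisjMC (hK g (C.edges_subset_edgeSet hg) hcg) hg
      · refine ((List.nodup_append.mp (List.nodup_append.mp hend).2.1).2.1).map_on
          (fun f hf g hg hfg => ?_)
        refine hinj ⟨C.edges_subset_edgeSet hf, fun h' => ?_⟩
          ⟨C.edges_subset_edgeSet hg, fun h' => ?_⟩ hfg
        · exact hdisjMC he2M (h' ▸ hf)
        · exact hdisjMC he2M (h' ▸ hg)
    · intro z hzA hzC
      obtain ⟨f, hf, rfl⟩ := List.mem_map.mp hzA
      rcases List.mem_cons.mp hzC with hz | hz
      · exact hdisjA hf (List.mem_append_left _ (hK f (A.edges_subset_edgeSet hf) hz))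
      · obtain ⟨g, hg, hcg⟩ := List.mem_map.mp hz
        have hfg : f = g := hinj
          ⟨A.edges_subset_edgeSet hf, fun h' => hdisjA (h' ▸ hf) (List.mem_append_left _ he2M)⟩
          ⟨C.edges_subset_edgeSet hg, fun h' => hdisjMC he2M (h' ▸ hg)⟩ hcg.symm
        exact hdisjA hf (List.mem_append_right _ (hfg ▸ hg))
  · rw [Walk.edges_append, Walk.edges_cons, Walk.edges_transfer, Walk.edges_transfer]
    intro f hf
    rcases List.mem_append.mp hf with hf | hf
    · exact hlt f (A.edges_subset_edgeSet hf)
    · rcases List.mem_cons.mp hf with rfl | hf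
      · exact hltab
      · exact hlt f (C.edges_subset_edgeSet hf)

lemma hasRCColoring_of_not_acyclic [Fintype V] {G : SimpleGraph V} (hc : G.Connected)
    (hac : ¬G.IsAcyclic) : HasRCColoring G (Fintype.card V - 2) := by
  classical
  obtain ⟨T, hle, hT⟩ := exists_tree_le G hc
  have hne : T ≠ G := fun h => hac (h ▸ hT.2)
  obtain ⟨e, heG, heT⟩ : ∃ e ∈ G.edgeSet, e ∉ T.edgeSet := by
    by_contra h
    push_neg at h
    exact hne (le_antisymm hle (edgeSet_subset_edgeSet.mp h))
  induction e using Sym2.ind with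
  | _ x y =>
  have hxy : G.Adj x y := heG
  have hTxy : ¬T.Adj x y := heT
  have hxyne : x ≠ y := hxy.ne
  obtain ⟨P, hP, hPu⟩ := hT.existsUnique_path x y
  obtain ⟨x2, h1, P1, rfl⟩ := Walk.not_nil_iff.mp (Walk.not_nil_of_ne (p := P) hxyne)
  have hP1n : ¬P1.Nil := fun hn => hTxy (hn.eq ▸ h1)
  obtain ⟨x3, h2, P2, rfl⟩ := (Walk.not_nil_iff (p := P1)).mp hP1n
  set P := Walk.cons h1 (Walk.cons h2 P2) with hPdef
  obtain ⟨y2, hy2, Q1, hQeq⟩ := Walk.not_nil_iff.mp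
    (Walk.not_nil_of_ne (Ne.symm hxyne) (p := P.reverse))
  set e1 : Sym2 V := s(x, x2) with he1def
  set p2 : Sym2 V := s(x2, x3) with hp2def
  set e2 : Sym2 V := s(y, y2) with he2def
  have he1P : e1 ∈ P.edges := by simp [hPdef, he1def]
  have hp2P : p2 ∈ P.edges := by simp [hPdef, hp2def]
  have he2P : e2 ∈ P.edges := by
    have : e2 ∈ P.reverse.edges := by rw [hQeq]; simp [he2def]
    rwa [Walk.edges_reverse, List.mem_reverse] at this
  have he1T : e1 ∈ T.edgeSet := h1
  have hp2T : p2 ∈ T.edgeSet := h2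
  have he2T : e2 ∈ T.edgeSet := hy2
  have hnexy : ∀ f ∈ T.edgeSet, f ≠ s(x, y) := fun f hf hfe => heT (hfe ▸ hf)
  have hx2y : x2 ≠ y := fun h => hTxy (h ▸ h1)
  have he12 : e1 ≠ e2 := by
    intro h
    rw [he1def, he2def, Sym2.eq_iff] at h
    rcases h with ⟨rfl, rfl⟩ | ⟨rfl, rfl⟩
    · exact hxyne rfl
    · exact hx2y rfl
  letI : Fintype T.edgeSet := Set.Finite.fintype (Set.toFinite _)
  set s0 : Finset (Sym2 V) := T.edgeFinset.erase e2 with hs0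
  have hcard : s0.card = Fintype.card V - 2 := by
    have h1' : T.edgeFinset.card + 1 = Fintype.card V := hT.card_edgeFinset
    have h2' : e2 ∈ T.edgeFinset := mem_edgeFinset.mpr he2T
    rw [hs0, Finset.card_erase_of_mem h2']
    omega
  set p2' : Sym2 V := if p2 = e2 then e1 else p2 with hp2'def
  have hp2's : p2' ∈ s0 := by
    rw [hp2'def]
    split_ifs with h
    · exact Finset.mem_erase.mpr ⟨he12, mem_edgeFinset.mpr he1T⟩
    · exact Finset.mem_erase.mpr ⟨h, mem_edgeFinset.mpr hp2T⟩
  have hp2'P : p2' ∈ P.edges := by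
    rw [hp2'def]; split_ifs with h
    · exact he1P
    · exact hp2P
  set base : Sym2 V → ℕ := fun f => if h : f ∈ s0 then ((s0.equivFin ⟨f, h⟩ : Fin _) : ℕ) else 0
    with hbasedef
  have hbase_lt : ∀ f ∈ s0, base f < Fintype.card V - 2 := by
    intro f hf
    rw [hbasedef]; simp only [dif_pos hf]
    rw [← hcard]
    exact (s0.equivFin ⟨f, hf⟩).isLt
  have hbase_inj : ∀ f ∈ s0, ∀ g ∈ s0, base f = base g → f = g := by
    intro f hf g hg hfg
    rw [hbasedef] at hfg
    simp only [dif_pos hf, dif_pos hg] at hfg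
    have := s0.equivFin.injective (Fin.val_injective hfg)
    simpa using this
  set c : Sym2 V → ℕ :=
    fun f => if f = e2 then base e1 else if f = s(x, y) then base p2' else base f with hcdef
  have hmem_s0 : ∀ f ∈ T.edgeSet, f ≠ e2 → f ∈ s0 :=
    fun f hf hfe => Finset.mem_erase.mpr ⟨hfe, mem_edgeFinset.mpr hf⟩
  have hcT : ∀ f ∈ T.edgeSet, f ≠ e2 → c f = base f := by
    intro f hf hfe
    rw [hcdef]
    simp only [if_neg hfe, if_neg (hnexy f hf)]
  have hinj : Set.InjOn c (T.edgeSet \ {e2}) := by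
    intro f hf g hg hfg
    rw [hcT f hf.1 hf.2, hcT g hg.1 hg.2] at hfg
    exact hbase_inj f (hmem_s0 f hf.1 hf.2) g (hmem_s0 g hg.1 hg.2) hfg
  have he1s0 : e1 ∈ s0 := hmem_s0 e1 he1T he12
  have hc21 : c e2 = c e1 := by
    rw [hcdef]
    simp only [if_pos rfl, if_true, if_neg he12, if_neg (hnexy e1 he1T)]
  have hcxy : c s(x, y) = base p2' := by
    rw [hcdef]
    simp only [if_neg (Ne.symm (hnexy e2 he2T)), if_pos rfl, if_true]
  have hK : ∀ f ∈ T.edgeSet, c f = c s(x, y) → f ∈ P.edges := by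
    intro f hf hcf
    by_cases hfe : f = e2
    · exact hfe ▸ he2P
    · rw [hcT f hf hfe, hcxy] at hcf
      have := hbase_inj f (hmem_s0 f hf hfe) p2' hp2's hcf
      exact this ▸ hp2'P
  have hlt : ∀ f ∈ T.edgeSet, c f < Fintype.card V - 2 := by
    intro f hf
    by_cases hfe : f = e2
    · rw [hfe, hc21, hcT e1 he1T he12]
      exact hbase_lt e1 he1s0
    · rw [hcT f hf hfe]
      exact hbase_lt f (hmem_s0 f hf hfe)
  have hlte : c s(x, y) < Fintype.card V - 2 := by
    rw [hcxy]; exact hbase_lt p2' hp2's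
  -- the coloring works
  refine ⟨c, fun u w huw => ?_⟩
  obtain ⟨q, hq, -⟩ := hT.existsUnique_path u w
  by_cases hboth : e1 ∈ q.edges ∧ e2 ∈ q.edges
  · -- reroute
    have hxs : x ∈ q.support := q.fst_mem_support_of_mem_edges hboth.1
    have hys : y ∈ q.support := q.fst_mem_support_of_mem_edges hboth.2
    obtain ⟨a, b, A, M, C, hdec, hor⟩ := walk_split q hxs hys
    rw [hdec] at hq
    have hM : M.IsPath := (hq.of_append_right).of_append_left
    rcases hor with ⟨ha, hb⟩ | ⟨ha, hb⟩
    · subst ha; subst hb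
      have hMP : M = P := hPu M hM
      exact reroute hle hinj hlt hxy hlte hq (hMP ▸ he2P)
        (fun f hf hcf => hMP ▸ hK f hf hcf)
    · subst ha; subst hb
      have hMP : M.reverse = P := hPu M.reverse hM.reverse
      have hmemM : ∀ f, f ∈ P.edges → f ∈ M.edges := by
        intro f hf
        rw [← hMP, Walk.edges_reverse, List.mem_reverse] at hf
        exact hf
      have hswap : (s(a, b) : Sym2 V) = s(b, a) := Sym2.eq_swap
      refine reroute hle hinj hlt hxy.symm ?_ hq (hmemM e2 he2P) ?_
      · rwa [hswap]
      · rw [hswap]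
        exact fun f hf hcf => hmemM f (hK f hf hcf)
  · -- direct path
    have hsub : ∀ f ∈ q.edges, f ∈ G.edgeSet :=
      fun f hf => edgeSet_mono hle (q.edges_subset_edgeSet hf)
    refine ⟨q.transfer G hsub, hq.transfer hsub, ?_, ?_⟩
    · rw [q.edges_transfer hsub]
      refine hq.isTrail.edges_nodup.map_on (fun f hf g hg hfg => ?_)
      have hfT := q.edges_subset_edgeSet hf
      have hgT := q.edges_subset_edgeSet hg
      by_cases hfe : f = e2
      · by_cases hge : g = e2
        · rw [hfe, hge]
        · subst hfe
          rw [hc21] at hfg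
          have := hinj ⟨he1T, he12⟩ ⟨hgT, hge⟩ hfg
          exact absurd ⟨this ▸ hg, hf⟩ hboth
      · by_cases hge : g = e2
        · subst hge
          rw [hc21] at hfg
          have := hinj ⟨hfT, hfe⟩ ⟨he1T, he12⟩ hfg
          exact absurd ⟨this ▸ hf, hg⟩ hboth
        · exact hinj ⟨hfT, hfe⟩ ⟨hgT, hge⟩ hfg
    · rw [q.edges_transfer hsub]
      exact fun f hf => hlt f (q.edges_subset_edgeSet hf)

end Aux

/-- a connected graph of order `n ≥ 2` has `rc G = n − 1` iff `G` is
a tree. -/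
theorem rc_eq_card_sub_one_iff_isTree {V : Type*} [Fintype V] (G : SimpleGraph V)
    (hG : G.Connected) (h2 : 2 ≤ Fintype.card V) :
    rc G = Fintype.card V - 1 ↔ G.IsTree := by
  constructor
  · intro hrc
    by_contra hnt
    have hnac : ¬G.IsAcyclic := fun h => hnt ⟨hG, h⟩
    have hm : HasRCColoring G (Fintype.card V - 2) := hasRCColoring_of_not_acyclic hG hnac
    have hle : rc G ≤ Fintype.card V - 2 := Nat.sInf_le hm
    omega
  · intro hT
    obtain ⟨c, hinj, hlt⟩ := exists_injOn_coloring G hT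
    have hmem : HasRCColoring G (Fintype.card V - 1) :=
      hasRCColoring_of_tree_le le_rfl hT hinj hlt
    have hub : rc G ≤ Fintype.card V - 1 := Nat.sInf_le hmem
    have hlb : Fintype.card V - 1 ≤ rc G := tree_rc_lower hT (Nat.sInf_mem (s := {k | HasRCColoring G k}) ⟨_, hmem⟩)
    omega
end
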